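/- Let T : X → X be an invertible linear operator with ‖T⁻¹‖ < 1 (operator norm). Then for every b ∈ X the equation P_K(x) + Tx = b has exactly one solution x ∈ X. -/
import Mathlib


open RealInnerProductSpace Filter Topology

variable {X : Type*} [NormedAddCommGroup X] [InnerProductSpace ℝ X] [FiniteDimensional ℝ X]

/-- The Clarke generalized Jacobian of a map `F : X → X` at `x`: the convex hull of all
limits of Fréchet derivatives of `F` along sequences of differentiability points
converging to `x`. -/
def clarkeJacobian (F : X → X) (x : X) : Set (X →L[ℝ] X) :=
  convexHull ℝ {V : X →L[ℝ] X | ∃ u : ℕ → X,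
    (∀ k, DifferentiableAt ℝ F (u k)) ∧
    Tendsto u atTop (𝓝 x) ∧
    Tendsto (fun k => fderiv ℝ F (u k)) atTop (𝓝 V)}

/-- `P` is the metric projection onto `K`: `P z` belongs to `K` and is a nearest point
of `K` to `z`. -/
def IsMetricProjection (K : Set X) (P : X → X) : Prop :=
  ∀ z : X, P z ∈ K ∧ ∀ y ∈ K, ‖z - P z‖ ≤ ‖z - y‖

/-- If `T` is an invertible linear operator with `‖T⁻¹‖ < 1`, then the projection equation
`P x + T x = b` has exactly one solution for every `b`. -/
theorem projEquation_existsUnique_of_inv_norm_lt_one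
    (K : Set X) (hne : K.Nonempty) (hcl : IsClosed K) (hconv : Convex ℝ K)
    (hcone : ∀ c : ℝ, 0 ≤ c → ∀ y ∈ K, c • y ∈ K)
    (P : X → X) (hP : IsMetricProjection K P)
    (T S : X →L[ℝ] X) (hTS : T * S = 1) (hST : S * T = 1) (hS : ‖S‖ < 1)
    (b : X) :
    ∃! x : X, P x + T x = b := by
  classical
  -- variational inequality for the metric projection
  have key : ∀ z : X, ∀ w ∈ K, ⟪z - P z, w - P z⟫ ≤ 0 := by
    intro z
    have : Nonempty ↥K := hne.to_subtype
    rw [← norm_eq_iInf_iff_real_inner_le_zero hconv (hP z).1]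
    refine le_antisymm (le_ciInf fun w => (hP z).2 w w.2) ?_
    exact ciInf_le ⟨0, by rintro _ ⟨w, rfl⟩; exact norm_nonneg _⟩
      (⟨P z, (hP z).1⟩ : K)
  -- P is nonexpansive
  have lip : ∀ x y : X, ‖P x - P y‖ ≤ ‖x - y‖ := by
    intro x y
    have h1 := key x (P y) (hP y).1
    have h2 := key y (P x) (hP x).1
    have hsq : ‖P x - P y‖ ^ 2 ≤ ⟪x - y, P x - P y⟫ := by
      have expand : ⟪x - P x, P y - P x⟫ + ⟪y - P y, P x - P y⟫
          = -⟪x - y, P x - P y⟫ + ‖P x - P y‖ ^ 2 := by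
        simp only [inner_sub_left, inner_sub_right, ← real_inner_self_eq_norm_sq]
        rw [real_inner_comm (P y) (P x)]
        ring
      nlinarith [add_nonpos h1 h2]
    have hcs := real_inner_le_norm (x - y) (P x - P y)
    by_cases h0 : ‖P x - P y‖ = 0
    · rw [h0]; exact norm_nonneg _
    · have : 0 < ‖P x - P y‖ := lt_of_le_of_ne (norm_nonneg _) (Ne.symm h0)
      nlinarith
  -- contraction
  set f : X → X := fun x => S (b - P x) with hf
  have hc : ContractingWith ⟨‖S‖, norm_nonneg S⟩ f := by
    constructor
    · exact_mod_cast hS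
    · refine LipschitzWith.of_dist_le_mul fun x y => ?_
      have : f x - f y = S (P y - P x) := by
        simp only [hf, ← map_sub]
        congr 1; abel
      rw [dist_eq_norm, this, dist_eq_norm]
      calc ‖S (P y - P x)‖ ≤ ‖S‖ * ‖P y - P x‖ := S.le_opNorm _
        _ ≤ ‖S‖ * ‖x - y‖ := by
            have := lip y x
            have hs0 := norm_nonneg S
            rw [show ‖x - y‖ = ‖y - x‖ from norm_sub_rev _ _]
            exact mul_le_mul_of_nonneg_left this hs0
  -- equivalence between the equation and being a fixed point of f
  have equiv : ∀ x : X, (P x + T x = b ↔ Function.IsFixedPt f x) := by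
    intro x
    constructor
    · intro h
      have hb : b - P x = T x := by rw [← h]; abel
      show S (b - P x) = x
      rw [hb]
      have : (S * T) x = x := by rw [hST]; rfl
      exact this
    · intro h
      have hx : S (b - P x) = x := h
      have : T (S (b - P x)) = T x := by rw [hx]
      have h2 : (T * S) (b - P x) = T x := this
      rw [hTS] at h2
      have h3 : b - P x = T x := h2
      rw [← h3]; abel
  have hfix := hc.fixedPoint_isFixedPt
  refine ⟨hc.fixedPoint f, (equiv _).2 hfix, fun y hy => ?_⟩
  exact hc.fixedPoint_unique ((equiv y).1 hy)
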